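/- Let X be a complex Banach space and T a quasi-compact bounded linear operator on X with r(T) = ‖T‖ ≥ 1. Then there exists at least one eigenvalue λ of T with |λ| = r(T), and for every eigenvalue λ with |λ| = r(T) the operator T − λI is a Browder operator with ascent one: it has closed range, dim ker(T − λI) = dim ker(T* − λI) < ∞, ker((T − λI)²) = ker(T − λI), and range((T − λI)²) = range(T − λI). -/

import Mathlib

open Filter Topology Metric
set_option linter.unusedSectionVars false
set_option maxHeartbeats 1000000


/-- The dual (transpose) operator `T* : X* → X*`, `T* f = f ∘ T`, of a bounded operator `T`
on a normed space `X`. -/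
noncomputable def dualOp {X : Type*} [NormedAddCommGroup X] [NormedSpace ℂ X]
    (T : X →L[ℂ] X) : StrongDual ℂ X →L[ℂ] StrongDual ℂ X :=
  (ContinuousLinearMap.compL ℂ X X ℂ).flip T

/-- A bounded operator `T` on a Banach space is *quasi-compact* if some power `T ^ m` (with
`m > 0`) is within distance `< 1` (in operator norm) of a compact operator. -/
def IsQuasiCompact {X : Type*} [NormedAddCommGroup X] [NormedSpace ℂ X]
    (T : X →L[ℂ] X) : Prop :=
  ∃ m : ℕ, 0 < m ∧ ∃ K : X →L[ℂ] X, IsCompactOperator K ∧ ‖T ^ m - K‖ < 1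

namespace QCProof

variable {X : Type*} [NormedAddCommGroup X] [NormedSpace ℂ X] [CompleteSpace X]

lemma compact_subseq {C : X →L[ℂ] X} (hC : IsCompactOperator C) {x : ℕ → X} {M : ℝ}
    (hb : ∀ n, ‖x n‖ ≤ M) :
    ∃ φ : ℕ → ℕ, StrictMono φ ∧ ∃ y, Tendsto (fun n => C (x (φ n))) atTop (𝓝 y) := by
  have hC' : IsCompactOperator ⇑(C.toLinearMap) := hC
  have hcpt : IsCompact (closure (⇑C.toLinearMap '' closedBall (0 : X) M)) :=
    hC'.isCompact_closure_image_closedBall M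
  have hmem : ∀ n, C (x n) ∈ closure (⇑C.toLinearMap '' closedBall (0 : X) M) := fun n =>
    subset_closure ⟨x n, by simpa [dist_eq_norm] using hb n, rfl⟩
  obtain ⟨y, -, φ, hφ, hy⟩ := hcpt.tendsto_subseq hmem
  exact ⟨φ, hφ, y, hy⟩

/-- The key Riesz-type property: `1 - C = B * S` with `C` compact. -/
def RieszLike (S : X →L[ℂ] X) : Prop :=
  ∃ C B : X →L[ℂ] X, IsCompactOperator C ∧ 1 - C = B * S

lemma rieszLike_subseq {S : X →L[ℂ] X} (hP : RieszLike S) {x : ℕ → X} {M : ℝ}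
    (hb : ∀ n, ‖x n‖ ≤ M) (hs : Tendsto (fun n => S (x n)) atTop (𝓝 0)) :
    ∃ φ : ℕ → ℕ, StrictMono φ ∧ ∃ y, Tendsto (fun n => x (φ n)) atTop (𝓝 y) := by
  obtain ⟨C, B, hC, hid⟩ := hP
  obtain ⟨φ, hφ, y, hy⟩ := compact_subseq hC hb
  refine ⟨φ, hφ, y, ?_⟩
  have hdecomp : ∀ n, x (φ n) = C (x (φ n)) + B (S (x (φ n))) := by
    intro n
    have h1 := congrArg (fun f : X →L[ℂ] X => f (x (φ n))) hid
    simp only [ContinuousLinearMap.sub_apply, ContinuousLinearMap.one_apply,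
      ContinuousLinearMap.mul_apply] at h1
    rw [sub_eq_iff_eq_add] at h1
    rw [add_comm] at h1; exact h1
  have hBS : Tendsto (fun n => B (S (x (φ n)))) atTop (𝓝 0) := by
    have : Tendsto (fun n => S (x (φ n))) atTop (𝓝 0) := hs.comp hφ.tendsto_atTop
    simpa [Function.comp_def] using (B.continuous.tendsto 0).comp this
  have := hy.add hBS
  rw [add_zero] at this
  exact Tendsto.congr (fun n => (hdecomp n).symm) this

/-- If `S` is Riesz-like then `ker S` is finite dimensional. -/
lemma rieszLike_finiteDimensional_ker {S : X →L[ℂ] X} (hP : RieszLike S) :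
    FiniteDimensional ℂ (LinearMap.ker ((S : X →L[ℂ] X) : X →ₗ[ℂ] X)) := by
  set N := LinearMap.ker ((S : X →L[ℂ] X) : X →ₗ[ℂ] X)
  have hNc : IsClosed (N : Set X) := ContinuousLinearMap.isClosed_ker S
  apply FiniteDimensional.of_isCompact_closedBall₀ ℂ (one_pos : (0:ℝ) < 1)
  rw [isCompact_iff_isSeqCompact]
  intro u hu
  have hb : ∀ n, ‖(u n : X)‖ ≤ 1 := by
    intro n; have := hu n; simpa [dist_eq_norm] using this
  have hs : Tendsto (fun n => S ((u n : X))) atTop (𝓝 0) := by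
    have : ∀ n, S ((u n : X)) = 0 := fun n => (u n).2
    simp [this]
  obtain ⟨φ, hφ, y, hy⟩ := rieszLike_subseq hP hb hs
  have hyN : y ∈ N := by
    have : ∀ n, ((u (φ n) : X)) ∈ (N : Set X) := fun n => (u (φ n)).2
    exact hNc.mem_of_tendsto hy (Eventually.of_forall this)
  have hynorm : ‖y‖ ≤ 1 :=
    le_of_tendsto (hy.norm) (Eventually.of_forall fun n => hb (φ n))
  refine ⟨⟨y, hyN⟩, ?_, φ, hφ, ?_⟩
  · simpa [dist_eq_norm] using hynorm
  · exact tendsto_subtype_rng.mpr hy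

/-- A finite dimensional subspace has a closed complement. -/
lemma exists_closed_compl (N : Submodule ℂ X) [FiniteDimensional ℂ N] :
    ∃ M : Submodule ℂ X, IsClosed (M : Set X) ∧ N ⊓ M = ⊥ ∧ N ⊔ M = ⊤ := by
  obtain ⟨P, hP⟩ := Submodule.ClosedComplemented.of_finiteDimensional N
  refine ⟨LinearMap.ker ((N.subtypeL.comp P : X →L[ℂ] X) : X →ₗ[ℂ] X), ContinuousLinearMap.isClosed_ker _, ?_, ?_⟩
  · rw [eq_bot_iff]
    rintro x ⟨hxN, hxM⟩
    have hxM' : (↑(P x) : X) = 0 := hxM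
    have hPx : P x = ⟨x, hxN⟩ := hP ⟨x, hxN⟩
    rw [hPx] at hxM'
    exact (Submodule.mem_bot ℂ).mpr hxM'
  · rw [eq_top_iff]
    intro x _
    have hx : x = ↑(P x) + (x - ↑(P x)) := by abel
    refine Submodule.mem_sup.mpr ⟨↑(P x), (P x).2, x - ↑(P x), ?_, by abel⟩
    show (↑(P (x - ↑(P x))) : X) = 0
    rw [map_sub, hP (P x)]
    simp

/-- If `S` is Riesz-like then `range S` is closed. -/
lemma rieszLike_isClosed_range {S : X →L[ℂ] X} (hP : RieszLike S) :
    IsClosed ((LinearMap.range ((S : X →L[ℂ] X) : X →ₗ[ℂ] X) : Submodule ℂ X) : Set X) := by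
  haveI := rieszLike_finiteDimensional_ker hP
  obtain ⟨M, hMc, hdisj, hcodisj⟩ := exists_closed_compl (LinearMap.ker ((S : X →L[ℂ] X) : X →ₗ[ℂ] X))
  -- range S = S '' M
  have hrange : ((LinearMap.range ((S : X →L[ℂ] X) : X →ₗ[ℂ] X) : Submodule ℂ X) : Set X) = S '' (M : Set X) := by
    ext y
    constructor
    · rintro ⟨x, rfl⟩
      have hx : x ∈ LinearMap.ker ((S : X →L[ℂ] X) : X →ₗ[ℂ] X) ⊔ M := hcodisj ▸ Submodule.mem_top
      obtain ⟨n, hn, m, hm, rfl⟩ := Submodule.mem_sup.mp hx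
      exact ⟨m, hm, by simp [map_add, LinearMap.mem_ker.mp hn]⟩
    · rintro ⟨m, hm, rfl⟩
      exact ⟨m, rfl⟩
  rw [hrange]
  -- S is bounded below on M
  have hbdd : ∃ c : ℝ, 0 < c ∧ ∀ m ∈ M, ‖m‖ ≤ c * ‖S m‖ := by
    by_contra hcon
    push_neg at hcon
    have hseq : ∀ n : ℕ, ∃ m : X, m ∈ M ∧ ‖m‖ = 1 ∧ ‖S m‖ < 1 / (n + 1) := by
      intro n
      obtain ⟨m, hmM, hm⟩ := hcon ((n : ℝ) + 1) (by positivity)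
      have hm0 : m ≠ 0 := by
        rintro rfl; simp at hm
      have hpos : (0:ℝ) < ‖m‖ := norm_pos_iff.mpr hm0
      refine ⟨((‖m‖ : ℂ))⁻¹ • m, M.smul_mem _ hmM, ?_, ?_⟩
      · rw [norm_smul]
        simp [norm_inv, hm0]
      · rw [map_smul, norm_smul]
        simp only [norm_inv, Complex.norm_real, norm_norm]
        rw [inv_mul_lt_iff₀ hpos, mul_one_div, lt_div_iff₀ (by positivity)]
        nlinarith [norm_nonneg (S m)]
    choose u huM hunorm huS using hseq
    have hb : ∀ n, ‖u n‖ ≤ 1 := fun n => (hunorm n).le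
    have hs : Tendsto (fun n => S (u n)) atTop (𝓝 0) := by
      rw [tendsto_iff_norm_sub_tendsto_zero]
      refine squeeze_zero (fun n => by positivity) (fun n => ?_)
        tendsto_one_div_add_atTop_nhds_zero_nat
      simpa using (huS n).le
    obtain ⟨φ, hφ, y, hy⟩ := rieszLike_subseq hP hb hs
    have hyM : y ∈ M := hMc.mem_of_tendsto hy (Eventually.of_forall fun n => huM (φ n))
    have hySker : S y = 0 := by
      have h1 : Tendsto (fun n => S (u (φ n))) atTop (𝓝 (S y)) :=
        (S.continuous.tendsto y).comp hy
      have h2 : Tendsto (fun n => S (u (φ n))) atTop (𝓝 0) := hs.comp hφ.tendsto_atTop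
      exact tendsto_nhds_unique h1 h2
    have hy0 : y = 0 := by
      have : y ∈ LinearMap.ker ((S : X →L[ℂ] X) : X →ₗ[ℂ] X) ⊓ M := ⟨hySker, hyM⟩
      rwa [hdisj, Submodule.mem_bot] at this
    have h2 : Tendsto (fun _ : ℕ => (1:ℝ)) atTop (𝓝 ‖y‖) :=
      (hy.norm).congr (fun n => hunorm (φ n))
    have hy1 : ‖y‖ = 1 := tendsto_nhds_unique h2 tendsto_const_nhds
    rw [hy0] at hy1; simp at hy1
  obtain ⟨c, hc, hbdd⟩ := hbdd
  -- conclude via antilipschitz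
  haveI : CompleteSpace M := hMc.completeSpace_coe
  set g : M →L[ℂ] X := S.comp M.subtypeL with hg
  have hanti : AntilipschitzWith (⟨c, hc.le⟩ : NNReal) g :=
    g.antilipschitz_of_bound (K := ⟨c, hc.le⟩) (fun m => hbdd m m.2)
  have hcl : IsClosed (Set.range g) := hanti.isClosed_range g.uniformContinuous
  have : S '' (M : Set X) = Set.range g := by
    ext y; constructor
    · rintro ⟨m, hm, rfl⟩; exact ⟨⟨m, hm⟩, rfl⟩
    · rintro ⟨m, rfl⟩; exact ⟨m, m.2, rfl⟩
  rwa [this]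

/-- Ranges of powers decrease. -/
lemma range_pow_antitone (S : X →L[ℂ] X) :
    Antitone (fun n : ℕ => (LinearMap.range ((S ^ n : X →L[ℂ] X) : X →ₗ[ℂ] X) : Submodule ℂ X)) := by
  apply antitone_nat_of_succ_le
  intro n
  rintro y ⟨x, rfl⟩
  exact ⟨S x, by rw [pow_succ]; rfl⟩

/-- Descent: the chain of ranges of powers of `S` eventually stabilizes (one step). -/
lemma descent_step {S : X →L[ℂ] X}
    (hcl : ∀ n : ℕ, IsClosed ((LinearMap.range ((S ^ n : X →L[ℂ] X) : X →ₗ[ℂ] X) : Submodule ℂ X) : Set X))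
    (hD : ∃ Chat : X →L[ℂ] X, IsCompactOperator Chat ∧ ∀ (n : ℕ) (x : X),
      x ∈ LinearMap.range ((S ^ n : X →L[ℂ] X) : X →ₗ[ℂ] X) → ∃ w ∈ LinearMap.range ((S ^ (n + 1) : X →L[ℂ] X) : X →ₗ[ℂ] X),
        ‖x - Chat x - w‖ ≤ (1 / 8 : ℝ) * ‖x‖) :
    ∃ q : ℕ, LinearMap.range ((S ^ (q + 1) : X →L[ℂ] X) : X →ₗ[ℂ] X) = LinearMap.range ((S ^ q : X →L[ℂ] X) : X →ₗ[ℂ] X) := by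
  obtain ⟨Chat, hChat, hdec⟩ := hD
  by_contra hcon
  push_neg at hcon
  -- strict chain, pick almost-orthogonal unit vectors via Riesz's lemma
  have hstrict : ∀ n : ℕ, LinearMap.range ((S ^ (n + 1) : X →L[ℂ] X) : X →ₗ[ℂ] X) < LinearMap.range ((S ^ n : X →L[ℂ] X) : X →ₗ[ℂ] X) :=
    fun n => lt_of_le_of_ne (range_pow_antitone S (Nat.le_succ n)) (hcon n)
  have hriesz : ∀ n : ℕ, ∃ u : X, u ∈ LinearMap.range ((S ^ n : X →L[ℂ] X) : X →ₗ[ℂ] X) ∧ ‖u‖ = 1 ∧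
      ∀ w ∈ LinearMap.range ((S ^ (n + 1) : X →L[ℂ] X) : X →ₗ[ℂ] X), (3/4 : ℝ) ≤ ‖u - w‖ := by
    intro n
    set Rn := LinearMap.range ((S ^ n : X →L[ℂ] X) : X →ₗ[ℂ] X)
    set Rn1 := LinearMap.range ((S ^ (n + 1) : X →L[ℂ] X) : X →ₗ[ℂ] X)
    have hle : Rn1 ≤ Rn := range_pow_antitone S (Nat.le_succ n)
    -- work inside the subtype ↥Rn
    set F : Submodule ℂ Rn := Rn1.comap Rn.subtype
    have hFc : IsClosed (F : Set Rn) := by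
      have : (F : Set Rn) = (Rn.subtype) ⁻¹' (Rn1 : Set X) := rfl
      rw [this]
      exact (hcl (n + 1)).preimage continuous_subtype_val
    have hFne : ∃ v : Rn, v ∉ F := by
      obtain ⟨x, hxRn, hxnot⟩ := SetLike.exists_of_lt (hstrict n)
      exact ⟨⟨x, hxRn⟩, hxnot⟩
    obtain ⟨v, hvF, hv⟩ := riesz_lemma hFc hFne (show (3/4 : ℝ) < 1 by norm_num)
    have hv0 : v ≠ 0 := by
      rintro rfl; exact hvF F.zero_mem
    have hvpos : (0:ℝ) < ‖(v:X)‖ := norm_pos_iff.mpr (by simpa using hv0)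
    have hne : ((‖(v:X)‖ : ℝ) : ℂ) ≠ 0 := Complex.ofReal_ne_zero.mpr hvpos.ne'
    refine ⟨(((‖(v:X)‖ : ℝ) : ℂ))⁻¹ • (v : X), Rn.smul_mem _ v.2, ?_, ?_⟩
    · rw [norm_smul, norm_inv, Complex.norm_real, norm_norm]
      exact inv_mul_cancel₀ hvpos.ne'
    · intro w hw
      have hwv : ((‖(v:X)‖ : ℝ) : ℂ) • w ∈ Rn1 := Rn1.smul_mem _ hw
      have hwRn : ((‖(v:X)‖ : ℝ) : ℂ) • w ∈ Rn := hle hwv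
      have h2 : (3/4 : ℝ) * ‖(v:X)‖ ≤ ‖(v:X) - ((‖(v:X)‖ : ℝ) : ℂ) • w‖ :=
        hv ⟨_, hwRn⟩ hwv
      have h3 : (((‖(v:X)‖ : ℝ) : ℂ))⁻¹ • ((v:X) - ((‖(v:X)‖ : ℝ) : ℂ) • w)
          = (((‖(v:X)‖ : ℝ) : ℂ))⁻¹ • (v:X) - w := by
        rw [smul_sub, inv_smul_smul₀ hne]
      calc (3/4 : ℝ) = ‖(v:X)‖⁻¹ * ((3/4) * ‖(v:X)‖) := by field_simp
        _ ≤ ‖(v:X)‖⁻¹ * ‖(v:X) - ((‖(v:X)‖ : ℝ) : ℂ) • w‖ :=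
            mul_le_mul_of_nonneg_left h2 (by positivity)
        _ = ‖(((‖(v:X)‖ : ℝ) : ℂ))⁻¹ • ((v:X) - ((‖(v:X)‖ : ℝ) : ℂ) • w)‖ := by
            rw [norm_smul, norm_inv, Complex.norm_real, norm_norm]
        _ = ‖(((‖(v:X)‖ : ℝ) : ℂ))⁻¹ • (v:X) - w‖ := by rw [h3]
  choose u huR hunorm husep using hriesz
  -- compactness contradiction
  obtain ⟨φ, hφ, z, hz⟩ := compact_subseq hChat (x := u) (M := 1) (fun n => (hunorm n).le)
  have hcauchy : CauchySeq (fun j => Chat (u (φ j))) := hz.cauchySeq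
  obtain ⟨J, hJ⟩ := Metric.cauchySeq_iff'.mp hcauchy (1/4) (by norm_num)
  -- compare indices J and J+1
  have hlt : φ J < φ (J + 1) := hφ (Nat.lt_succ_self J)
  set a := φ J
  set b := φ (J + 1)
  obtain ⟨wa, hwa, hea⟩ := hdec a (u a) (huR a)
  obtain ⟨wb, hwb, heb⟩ := hdec b (u b) (huR b)
  have hblow : u b ∈ LinearMap.range ((S ^ (a + 1) : X →L[ℂ] X) : X →ₗ[ℂ] X) := range_pow_antitone S hlt (huR b)
  have hwblow : wb ∈ LinearMap.range ((S ^ (a + 1) : X →L[ℂ] X) : X →ₗ[ℂ] X) :=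
    range_pow_antitone S (by omega : a + 1 ≤ b + 1) hwb
  have hwsum : wa + u b - wb ∈ LinearMap.range ((S ^ (a + 1) : X →L[ℂ] X) : X →ₗ[ℂ] X) := by
    exact Submodule.sub_mem _ (Submodule.add_mem _ hwa hblow) hwblow
  have hsep := husep a _ hwsum
  -- ‖Chat u_a - Chat u_b‖ ≥ 3/4 - 1/8 - 1/8 = 1/2
  have hnorm1 : ‖u a - Chat (u a) - wa‖ ≤ 1/8 := by
    have := hea; rw [hunorm a] at this; linarith
  have hnorm2 : ‖u b - Chat (u b) - wb‖ ≤ 1/8 := by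
    have := heb; rw [hunorm b] at this; linarith
  have hdist : (1/2 : ℝ) ≤ ‖Chat (u a) - Chat (u b)‖ := by
    set p := u a - (wa + u b - wb) with hp
    set q := u a - Chat (u a) - wa with hq
    set r := u b - Chat (u b) - wb with hr
    have hid : Chat (u a) - Chat (u b) = p - q + r := by
      rw [hp, hq, hr]; abel
    have hptri : ‖p‖ ≤ ‖p - q + r‖ + (‖q‖ + ‖r‖) := by
      calc ‖p‖ = ‖(p - q + r) + (q - r)‖ := by congr 1; abel
        _ ≤ ‖p - q + r‖ + ‖q - r‖ := norm_add_le _ _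
        _ ≤ ‖p - q + r‖ + (‖q‖ + ‖r‖) := by
            have := norm_sub_le q r; linarith
    rw [hid]
    linarith [hsep]
  have hd1 := hJ (J + 1) (Nat.le_succ J)
  rw [dist_eq_norm] at hd1
  have hd1' : ‖Chat (u a) - Chat (u b)‖ < 1/4 := by
    rw [norm_sub_rev]; exact hd1
  linarith


section Helpers
variable {X : Type*} [NormedAddCommGroup X] [NormedSpace ℂ X] [CompleteSpace X]

lemma compact_mul_left {C : X →L[ℂ] X} (hC : IsCompactOperator C) (W : X →L[ℂ] X) :
    IsCompactOperator (W * C : X →L[ℂ] X) :=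
  hC.clm_comp W

lemma compact_mul_right {C : X →L[ℂ] X} (hC : IsCompactOperator C) (W : X →L[ℂ] X) :
    IsCompactOperator (C * W : X →L[ℂ] X) :=
  hC.comp_clm W

lemma compact_smul {C : X →L[ℂ] X} (hC : IsCompactOperator C) (c : ℂ) :
    IsCompactOperator (c • C : X →L[ℂ] X) := by
  have := hC.smul c
  have hcoe : ⇑(c • C) = c • ⇑C := rfl
  rwa [hcoe]

lemma ring_id {A : Type*} [Ring A] (uu v1 w k C : A) (h : (uu * v1) * w = 1) :
    (uu - k) * (v1 * (1 - C)) = (uu * v1) * (1 - (C + w * (k * (v1 * (1 - C))))) := by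
  have h2 : (uu * v1) * (w * (k * (v1 * (1 - C)))) = k * (v1 * (1 - C)) := by
    rw [← mul_assoc, h, one_mul]
  rw [sub_add_eq_sub_sub, mul_sub (uu * v1) (1 - C), h2]
  noncomm_ring

lemma commute_smul_one (c : ℂ) (a : X →L[ℂ] X) : Commute (c • (1 : X →L[ℂ] X)) a := by
  rw [← Algebra.algebraMap_eq_smul_one]
  exact Algebra.commutes c a

end Helpers

section Structure
variable {X : Type*} [NormedAddCommGroup X] [NormedSpace ℂ X] [CompleteSpace X]
variable {T K : X →L[ℂ] X} {m : ℕ} {l : ℂ}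

/-- All the structural consequences of quasicompactness for `S = T - l•1`, `|l| ≥ 1`. -/
lemma quasi_structure (hm : 0 < m) (hK : IsCompactOperator K) (hTK : ‖T ^ m - K‖ < 1)
    (hl : 1 ≤ ‖l‖) :
    (∀ n : ℕ, RieszLike ((T - l • 1) ^ (n + 1))) ∧
    (∃ Chat : X →L[ℂ] X, IsCompactOperator Chat ∧ ∀ (n : ℕ) (x : X),
      x ∈ LinearMap.range (((T - l • 1) ^ n : X →L[ℂ] X) : X →ₗ[ℂ] X) → ∃ w ∈ LinearMap.range (((T - l • 1) ^ (n + 1) : X →L[ℂ] X) : X →ₗ[ℂ] X),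
        ‖x - Chat x - w‖ ≤ (1 / 8 : ℝ) * ‖x‖) := by
  set S : X →L[ℂ] X := T - l • 1 with hS
  have hl0 : l ≠ 0 := by
    intro h; rw [h] at hl; simp at hl; linarith
  have hlm : l ^ m ≠ 0 := pow_ne_zero _ hl0
  set μ : ℂ := (l ^ m)⁻¹ with hμdef
  have hμ : ‖μ‖ ≤ 1 := by
    rw [hμdef, norm_inv, norm_pow]
    rw [inv_le_one_iff₀]
    right
    exact one_le_pow₀ hl
  set A : X →L[ℂ] X := T ^ m - K with hA
  set R : X →L[ℂ] X := μ • A with hRdef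
  have hRA : ‖R‖ ≤ ‖A‖ := by
    rw [hRdef, norm_smul μ A]
    nlinarith [norm_nonneg A]
  have hR : ‖R‖ < 1 := lt_of_le_of_lt hRA hTK
  set u : (X →L[ℂ] X)ˣ := Units.oneSub R hR with hudef
  have hu : (u : X →L[ℂ] X) = 1 - R := rfl
  -- the geometric sum
  have hcomm1T : Commute (l • (1 : X →L[ℂ] X)) T := commute_smul_one l T
  set G : X →L[ℂ] X := ∑ i ∈ Finset.range m, (l • (1 : X →L[ℂ] X)) ^ i * T ^ (m - 1 - i) with hG
  have hgeom : G * (l • 1 - T) = l ^ m • 1 - T ^ m := by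
    have := hcomm1T.geom_sum₂_mul m
    rw [← hG] at this
    rw [this, smul_pow, one_pow]
  set B1 : X →L[ℂ] X := (-μ) • G with hB1
  have hST : Commute S T := by
    rw [hS]
    exact (Commute.refl T).sub_left (commute_smul_one l T)
  have hSl1 : Commute S (l • (1 : X →L[ℂ] X)) := ((commute_smul_one l S)).symm
  have hSG : Commute S G := by
    apply Commute.sum_right
    intro i _
    exact (hSl1.pow_right i).mul_right (hST.pow_right (m - 1 - i))
  have hSB1 : Commute S B1 := hSG.smul_right (-μ)
  have hB1S : B1 * S = 1 - μ • T ^ m := by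
    have h1 : B1 * S = μ • (G * (l • 1 - T)) := by
      rw [hB1, hS]
      rw [smul_mul_assoc]
      rw [← neg_sub (l • (1:X →L[ℂ] X)) T, mul_neg, smul_neg, neg_smul, neg_neg]
    rw [h1, hgeom, smul_sub, smul_smul, hμdef, inv_mul_cancel₀ hlm, one_smul]
  have hUK : B1 * S = (u : X →L[ℂ] X) - μ • K := by
    rw [hB1S, hu, hRdef, hA, smul_sub]
    abel
  -- `μ • K` is compact
  have hμK : IsCompactOperator (μ • K : X →L[ℂ] X) := compact_smul hK μ
  -- conjugation induction
  have hconj : ∀ n : ℕ, ∃ C : X →L[ℂ] X, IsCompactOperator C ∧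
      (B1 * S) ^ (n + 1) = ((u ^ (n + 1) : (X →L[ℂ] X)ˣ) : X →L[ℂ] X) * (1 - C) := by
    intro n
    induction n with
    | zero =>
      refine ⟨((u⁻¹ : (X →L[ℂ] X)ˣ) : X →L[ℂ] X) * (μ • K),
        compact_mul_left hμK _, ?_⟩
      rw [pow_one, pow_one, hUK, mul_sub, mul_one, ← mul_assoc]
      rw [Units.mul_inv]
      rw [one_mul]
    | succ n ih =>
      obtain ⟨C, hC, hCn⟩ := ih
      refine ⟨C + ((u⁻¹ ^ (n + 2) : (X →L[ℂ] X)ˣ) : X →L[ℂ] X) * ((μ • K) *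
        (((u ^ (n + 1) : (X →L[ℂ] X)ˣ) : X →L[ℂ] X) * (1 - C))),
        hC.add (compact_mul_left (compact_mul_right hμK _) _), ?_⟩
      have hpow : (B1 * S) ^ (n + 2) = (B1 * S) * (B1 * S) ^ (n + 1) := by
        rw [pow_succ']
      rw [hpow, hCn, hUK]
      have hval : ((u ^ (n + 1 + 1) : (X →L[ℂ] X)ˣ) : X →L[ℂ] X) =
          (u : X →L[ℂ] X) * ((u ^ (n + 1) : (X →L[ℂ] X)ˣ) : X →L[ℂ] X) := by
        rw [← Units.val_mul, ← pow_succ']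
      rw [hval]
      apply ring_id
      have hgrp : (u * u ^ (n + 1)) * u⁻¹ ^ (n + 2) = 1 := by
        rw [← pow_succ']; group
      calc (u : X →L[ℂ] X) * ((u ^ (n + 1) : (X →L[ℂ] X)ˣ) : X →L[ℂ] X) *
            ((u⁻¹ ^ (n + 2) : (X →L[ℂ] X)ˣ) : X →L[ℂ] X)
          = ((u * u ^ (n + 1) * u⁻¹ ^ (n + 2) : (X →L[ℂ] X)ˣ) : X →L[ℂ] X) := by
            rw [Units.val_mul, Units.val_mul]
        _ = 1 := by rw [hgrp, Units.val_one]
  refine ⟨?_, ?_⟩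
  · -- RieszLike for all powers
    intro n
    obtain ⟨C, hC, hCn⟩ := hconj n
    refine ⟨C, ((u⁻¹ ^ (n + 1) : (X →L[ℂ] X)ˣ) : X →L[ℂ] X) * B1 ^ (n + 1), hC, ?_⟩
    have h1 : ((u⁻¹ ^ (n + 1) : (X →L[ℂ] X)ˣ) : X →L[ℂ] X) *
        ((u ^ (n + 1) : (X →L[ℂ] X)ˣ) : X →L[ℂ] X) = 1 := by
      have hgrp : u⁻¹ ^ (n + 1) * u ^ (n + 1) = 1 := by group
      rw [← Units.val_mul, hgrp, Units.val_one]
    have h2 : (B1 * S) ^ (n + 1) = B1 ^ (n + 1) * S ^ (n + 1) := hSB1.symm.mul_pow (n + 1)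
    calc (1 : X →L[ℂ] X) - C
        = ((u⁻¹ ^ (n + 1) : (X →L[ℂ] X)ˣ) : X →L[ℂ] X) *
            (((u ^ (n + 1) : (X →L[ℂ] X)ˣ) : X →L[ℂ] X) * (1 - C)) := by
          rw [← mul_assoc, h1, one_mul]
      _ = ((u⁻¹ ^ (n + 1) : (X →L[ℂ] X)ˣ) : X →L[ℂ] X) * (B1 ^ (n + 1) * S ^ (n + 1)) := by
          rw [← hCn, h2]
      _ = ((u⁻¹ ^ (n + 1) : (X →L[ℂ] X)ˣ) : X →L[ℂ] X) * B1 ^ (n + 1) * S ^ (n + 1) := by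
          rw [mul_assoc]
  · -- the epsilon-decomposition
    have hLj : ∀ j : ℕ, ∃ L : X →L[ℂ] X, IsCompactOperator L ∧
        R ^ j = (μ • T ^ m) ^ j - L := by
      intro j
      induction j with
      | zero => exact ⟨0, isCompactOperator_zero, by simp⟩
      | succ j ih =>
        obtain ⟨L, hL, hLj⟩ := ih
        refine ⟨(μ • T ^ m) * L + ((μ • K) * (μ • T ^ m) ^ j - (μ • K) * L),
          (compact_mul_left hL _).add ((compact_mul_right hμK _).sub
            (compact_mul_right hμK _)), ?_⟩
        have hRsplit : R = μ • T ^ m - μ • K := by rw [hRdef, hA, smul_sub]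
        have h1 : R ^ (j + 1) = R * R ^ j := pow_succ' R j
        rw [h1, hLj, hRsplit, pow_succ' (μ • T ^ m) j]
        noncomm_ring
    have hgeoms : ∀ N : ℕ, (u : X →L[ℂ] X) * ∑ j ∈ Finset.range N, R ^ j = 1 - R ^ N := by
      intro N
      have hcomR : Commute R (∑ j ∈ Finset.range N, R ^ j) := by
        apply Commute.sum_right
        intro j _
        exact (Commute.refl R).pow_right j
      have h1 : (∑ j ∈ Finset.range N, R ^ j) * (R - 1) = R ^ N - 1 := geom_sum_mul R N
      have h2 : ((1 : X →L[ℂ] X) - R) * (∑ j ∈ Finset.range N, R ^ j)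
          = (∑ j ∈ Finset.range N, R ^ j) * (1 - R) :=
        ((Commute.one_left _).sub_left hcomR).eq
      rw [hu, h2]
      calc (∑ j ∈ Finset.range N, R ^ j) * (1 - R)
          = -((∑ j ∈ Finset.range N, R ^ j) * (R - 1)) := by noncomm_ring
        _ = -(R ^ N - 1) := by rw [h1]
        _ = 1 - R ^ N := by noncomm_ring
    have hsum : ∀ N : ℕ, ∃ L : X →L[ℂ] X, IsCompactOperator L ∧
        ∑ j ∈ Finset.range N, R ^ j = (∑ j ∈ Finset.range N, (μ • T ^ m) ^ j) - L := by
      intro N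
      induction N with
      | zero => exact ⟨0, isCompactOperator_zero, by simp⟩
      | succ N ih =>
        obtain ⟨L, hL, hLN⟩ := ih
        obtain ⟨L2, hL2, hLj2⟩ := hLj N
        refine ⟨L + L2, hL.add hL2, ?_⟩
        rw [Finset.sum_range_succ, Finset.sum_range_succ, hLN, hLj2]
        abel
    -- choose N large
    have hpowto : Filter.Tendsto
        (fun N : ℕ => ‖((u⁻¹ : (X →L[ℂ] X)ˣ) : X →L[ℂ] X)‖ * ‖B1 * S‖ * ‖R‖ ^ N)
        Filter.atTop (𝓝 0) := by
      have h0 := tendsto_pow_atTop_nhds_zero_of_lt_one (norm_nonneg R) hR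
      have := h0.const_mul (‖((u⁻¹ : (X →L[ℂ] X)ˣ) : X →L[ℂ] X)‖ * ‖B1 * S‖)
      simpa using this
    obtain ⟨N, hN, hN1⟩ : ∃ N : ℕ,
        ‖((u⁻¹ : (X →L[ℂ] X)ˣ) : X →L[ℂ] X)‖ * ‖B1 * S‖ * ‖R‖ ^ N ≤ 1/8 ∧ 1 ≤ N := by
      have h8 := hpowto.eventually_lt_const (show (0:ℝ) < 1/8 by norm_num)
      exact ((h8.and (Filter.eventually_ge_atTop 1)).mono
        (fun N hN => ⟨hN.1.le, hN.2⟩)).exists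
    obtain ⟨L, hL, hLN⟩ := hsum N
    set C1 : X →L[ℂ] X := ((u⁻¹ : (X →L[ℂ] X)ˣ) : X →L[ℂ] X) * (μ • K) with hC1def
    have hC1 : (1 : X →L[ℂ] X) - C1 = ((u⁻¹ : (X →L[ℂ] X)ˣ) : X →L[ℂ] X) * (B1 * S) := by
      rw [hUK, mul_sub, Units.inv_mul, hC1def]
    set Chat : X →L[ℂ] X := C1 - L * (B1 * S) with hChatdef
    have hChatC : IsCompactOperator Chat := by
      rw [hChatdef]
      exact (compact_mul_left hμK _).sub (compact_mul_right hL _)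
    set PN : X →L[ℂ] X := (∑ j ∈ Finset.range N, (μ • T ^ m) ^ j) * B1 with hPNdef
    set E : X →L[ℂ] X := ((u⁻¹ : (X →L[ℂ] X)ˣ) : X →L[ℂ] X) * R ^ N * (B1 * S) with hEdef
    have hinv : ((u⁻¹ : (X →L[ℂ] X)ˣ) : X →L[ℂ] X)
        = (∑ j ∈ Finset.range N, R ^ j) + ((u⁻¹ : (X →L[ℂ] X)ˣ) : X →L[ℂ] X) * R ^ N := by
      have h3 := congrArg (fun W => ((u⁻¹ : (X →L[ℂ] X)ˣ) : X →L[ℂ] X) * W) (hgeoms N)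
      rw [← mul_assoc, Units.inv_mul, one_mul, mul_sub, mul_one] at h3
      rw [h3]; abel
    have hkey : (1 : X →L[ℂ] X) - Chat = PN * S + E := by
      calc (1 : X →L[ℂ] X) - Chat = (1 - C1) + L * (B1 * S) := by rw [hChatdef]; abel
        _ = (((u⁻¹ : (X →L[ℂ] X)ˣ) : X →L[ℂ] X) + L) * (B1 * S) := by
            rw [hC1, add_mul]
        _ = ((((∑ j ∈ Finset.range N, (μ • T ^ m) ^ j) - L
              + ((u⁻¹ : (X →L[ℂ] X)ˣ) : X →L[ℂ] X) * R ^ N) + L)) * (B1 * S) := by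
            rw [← hLN, ← hinv]
        _ = ((∑ j ∈ Finset.range N, (μ • T ^ m) ^ j)
              + ((u⁻¹ : (X →L[ℂ] X)ˣ) : X →L[ℂ] X) * R ^ N) * (B1 * S) := by
            congr 1; abel
        _ = PN * S + E := by
            rw [add_mul, hPNdef, hEdef, mul_assoc, mul_assoc]
    have hEnorm : ‖E‖ ≤ 1/8 := by
      have e1 : ‖E‖ ≤ ‖((u⁻¹ : (X →L[ℂ] X)ˣ) : X →L[ℂ] X) * R ^ N‖ * ‖B1 * S‖ :=
        norm_mul_le _ _
      have e2 : ‖((u⁻¹ : (X →L[ℂ] X)ˣ) : X →L[ℂ] X) * R ^ N‖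
          ≤ ‖((u⁻¹ : (X →L[ℂ] X)ˣ) : X →L[ℂ] X)‖ * ‖R ^ N‖ := norm_mul_le _ _
      have e3 : ‖R ^ N‖ ≤ ‖R‖ ^ N := norm_pow_le' R hN1
      have e4 : (0:ℝ) ≤ ‖B1 * S‖ := norm_nonneg _
      have e5 : (0:ℝ) ≤ ‖((u⁻¹ : (X →L[ℂ] X)ˣ) : X →L[ℂ] X)‖ := norm_nonneg _
      have e6 : ‖((u⁻¹ : (X →L[ℂ] X)ˣ) : X →L[ℂ] X)‖ * ‖R ^ N‖
          ≤ ‖((u⁻¹ : (X →L[ℂ] X)ˣ) : X →L[ℂ] X)‖ * ‖R‖ ^ N :=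
        mul_le_mul_of_nonneg_left e3 e5
      have e7 : ‖((u⁻¹ : (X →L[ℂ] X)ˣ) : X →L[ℂ] X) * R ^ N‖ * ‖B1 * S‖
          ≤ (‖((u⁻¹ : (X →L[ℂ] X)ˣ) : X →L[ℂ] X)‖ * ‖R‖ ^ N) * ‖B1 * S‖ :=
        mul_le_mul_of_nonneg_right (e2.trans e6) e4
      have e8 : (‖((u⁻¹ : (X →L[ℂ] X)ˣ) : X →L[ℂ] X)‖ * ‖R‖ ^ N) * ‖B1 * S‖
          = ‖((u⁻¹ : (X →L[ℂ] X)ˣ) : X →L[ℂ] X)‖ * ‖B1 * S‖ * ‖R‖ ^ N := by ring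
      linarith
    have hSPN : Commute S PN := by
      refine Commute.mul_right ?_ hSB1
      apply Commute.sum_right
      intro j _
      exact ((hST.pow_right m).smul_right μ).pow_right j
    refine ⟨Chat, hChatC, ?_⟩
    intro n x hx
    obtain ⟨y, hy⟩ := hx
    refine ⟨PN (S x), ⟨PN y, ?_⟩, ?_⟩
    · have hcomm : S ^ (n+1) * PN = PN * S ^ (n+1) := (hSPN.pow_left (n+1)).eq
      calc (S ^ (n+1)) (PN y) = (S ^ (n+1) * PN) y := rfl
        _ = (PN * S ^ (n+1)) y := by rw [hcomm]
        _ = PN ((S ^ (n+1)) y) := rfl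
        _ = PN (S ((S ^ n) y)) := by rw [pow_succ' S n]; rfl
        _ = PN (S x) := by rw [← hy]; rfl
    · have happ := congrArg (fun f : X →L[ℂ] X => f x) hkey
      simp only [ContinuousLinearMap.sub_apply, ContinuousLinearMap.add_apply,
        ContinuousLinearMap.one_apply, ContinuousLinearMap.mul_apply] at happ
      have hre : x - Chat x - PN (S x) = E x := by rw [happ]; abel
      rw [hre]
      calc ‖E x‖ ≤ ‖E‖ * ‖x‖ := E.le_opNorm x
        _ ≤ 1/8 * ‖x‖ := mul_le_mul_of_nonneg_right hEnorm (norm_nonneg x)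

end Structure


section Ascent
variable {X : Type*} [NormedAddCommGroup X] [NormedSpace ℂ X] [CompleteSpace X]

/-- Normaloid ascent-one: if `‖l‖ = ‖T‖ ≥ 1` then `ker (T - l)² = ker (T - l)`. -/
lemma ascent_one {T : X →L[ℂ] X} {l : ℂ} (hlT : ‖l‖ = ‖T‖) (h1 : 1 ≤ ‖T‖) :
    ∀ x : X, (T - l • 1) ((T - l • 1) x) = 0 → (T - l • 1) x = 0 := by
  intro x hx
  set S : X →L[ℂ] X := T - l • 1 with hS
  set y : X := S x with hy
  have hly : 1 ≤ ‖l‖ := by rw [hlT]; exact h1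
  have hl0 : (0:ℝ) < ‖l‖ := lt_of_lt_of_le zero_lt_one hly
  have hTy : T y = l • y := by
    have : S y = 0 := hx
    rw [hS] at this
    simp only [ContinuousLinearMap.sub_apply, ContinuousLinearMap.smul_apply,
      ContinuousLinearMap.one_apply, sub_eq_zero] at this
    exact this
  have hTx : T x = l • x + y := by
    have : S x = y := rfl
    rw [hS] at this
    simp only [ContinuousLinearMap.sub_apply, ContinuousLinearMap.smul_apply,
      ContinuousLinearMap.one_apply] at this
    rw [← this]; abel
  have hTn : ∀ n : ℕ, (T ^ (n + 1)) x = l ^ (n + 1) • x + (((n + 1 : ℕ) : ℂ) * l ^ n) • y := by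
    intro n
    induction n with
    | zero => simpa using hTx
    | succ n ih =>
      have hstep : (T ^ (n + 2)) x = T ((T ^ (n + 1)) x) := by
        rw [pow_succ' T (n + 1)]; rfl
      rw [hstep, ih, map_add, map_smul, map_smul, hTx, hTy]
      push_cast
      module
  have hbound : ∀ n : ℕ, ((n:ℝ) + 1) * ‖y‖ ≤ 2 * ‖l‖ * ‖x‖ := by
    intro n
    have hb1 : ‖(T ^ (n + 1)) x‖ ≤ ‖l‖ ^ (n + 1) * ‖x‖ := by
      have h2 : ‖(T ^ (n+1)) x‖ ≤ ‖T ^ (n+1)‖ * ‖x‖ := ContinuousLinearMap.le_opNorm _ _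
      have h3 : ‖T ^ (n+1)‖ ≤ ‖T‖ ^ (n+1) := norm_pow_le' T (Nat.succ_pos n)
      rw [hlT]
      nlinarith [norm_nonneg x]
    rw [hTn n] at hb1
    have hlow : ‖(((n + 1 : ℕ) : ℂ) * l ^ n) • y‖
        ≤ ‖l ^ (n + 1) • x + (((n + 1 : ℕ) : ℂ) * l ^ n) • y‖ + ‖l ^ (n + 1) • x‖ := by
      calc ‖(((n + 1 : ℕ) : ℂ) * l ^ n) • y‖
          = ‖(l ^ (n + 1) • x + (((n + 1 : ℕ) : ℂ) * l ^ n) • y) - l ^ (n + 1) • x‖ := by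
            congr 1; abel
        _ ≤ _ := norm_sub_le _ _
    have hc : ‖(((n + 1 : ℕ) : ℂ) * l ^ n) • y‖ = ((n:ℝ) + 1) * ‖l‖ ^ n * ‖y‖ := by
      rw [norm_smul, norm_mul, norm_pow, Complex.norm_natCast]
      push_cast
      ring
    have hcx : ‖l ^ (n + 1) • x‖ = ‖l‖ ^ (n + 1) * ‖x‖ := by
      rw [norm_smul, norm_pow]
    rw [hc, hcx] at hlow
    -- (n+1) ‖l‖^n ‖y‖ ≤ 2 ‖l‖^{n+1} ‖x‖, divide by ‖l‖^n ≥ 1 > 0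
    have hpow : (0:ℝ) < ‖l‖ ^ n := pow_pos hl0 n
    have hkey : ((n:ℝ) + 1) * ‖l‖ ^ n * ‖y‖ ≤ 2 * (‖l‖ ^ (n + 1) * ‖x‖) := by
      linarith
    have hrw : ‖l‖ ^ (n + 1) = ‖l‖ ^ n * ‖l‖ := pow_succ _ _
    rw [hrw] at hkey
    have := mul_le_mul_of_nonneg_left hkey (le_of_lt (inv_pos.mpr hpow))
    have hcancel : (‖l‖ ^ n)⁻¹ * ‖l‖ ^ n = 1 := inv_mul_cancel₀ hpow.ne'
    calc ((n:ℝ) + 1) * ‖y‖ = ((‖l‖ ^ n)⁻¹ * ‖l‖ ^ n) * (((n:ℝ) + 1) * ‖y‖) := by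
          rw [hcancel, one_mul]
      _ = (‖l‖ ^ n)⁻¹ * (((n:ℝ) + 1) * ‖l‖ ^ n * ‖y‖) := by ring
      _ ≤ (‖l‖ ^ n)⁻¹ * (2 * (‖l‖ ^ n * ‖l‖ * ‖x‖)) := this
      _ = ((‖l‖ ^ n)⁻¹ * ‖l‖ ^ n) * (2 * ‖l‖ * ‖x‖) := by ring
      _ = 2 * ‖l‖ * ‖x‖ := by rw [hcancel, one_mul]
  by_contra hy0
  have hypos : (0:ℝ) < ‖y‖ := norm_pos_iff.mpr hy0
  obtain ⟨n, hn⟩ := exists_nat_gt (2 * ‖l‖ * ‖x‖ / ‖y‖)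
  have := hbound n
  rw [div_lt_iff₀ hypos] at hn
  nlinarith

end Ascent


section Decomp
variable {X : Type*} [NormedAddCommGroup X] [NormedSpace ℂ X] [CompleteSpace X]

lemma ker_pow_eq {S : X →L[ℂ] X} (hasc : ∀ x : X, S (S x) = 0 → S x = 0) :
    ∀ n : ℕ, LinearMap.ker ((S ^ (n + 1) : X →L[ℂ] X) : X →ₗ[ℂ] X) = LinearMap.ker ((S : X →L[ℂ] X) : X →ₗ[ℂ] X) := by
  intro n
  induction n with
  | zero => rw [pow_one]
  | succ n ih =>
    ext x
    constructor
    · intro hx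
      have hx' : (S ^ (n + 1)) (S x) = 0 := by
        have h1 : (S ^ (n + 2)) x = (S ^ (n + 1)) (S x) := by
          rw [pow_succ S (n + 1)]; rfl
        rw [← h1]; exact hx
      have hSx : S x ∈ LinearMap.ker ((S ^ (n + 1) : X →L[ℂ] X) : X →ₗ[ℂ] X) := hx'
      rw [ih] at hSx
      have : S (S x) = 0 := hSx
      exact LinearMap.mem_ker.mpr (hasc x this)
    · intro hx
      have hx0 : S x = 0 := hx
      have : (S ^ (n + 2)) x = (S ^ (n + 1)) (S x) := by
        rw [pow_succ S (n + 1)]; rfl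
      rw [LinearMap.mem_ker]; show (S ^ (n + 2)) x = 0; rw [this, hx0, map_zero]

lemma range_pow_succ (S : X →L[ℂ] X) (a : ℕ) :
    LinearMap.range ((S ^ (a + 1) : X →L[ℂ] X) : X →ₗ[ℂ] X) = Submodule.map (S : X →ₗ[ℂ] X) (LinearMap.range ((S ^ a : X →L[ℂ] X) : X →ₗ[ℂ] X)) := by
  ext y
  simp only [LinearMap.mem_range, Submodule.mem_map]
  constructor
  · rintro ⟨x, rfl⟩
    exact ⟨(S ^ a) x, ⟨x, rfl⟩, by rw [pow_succ' S a]; rfl⟩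
  · rintro ⟨z, ⟨x, rfl⟩, rfl⟩
    exact ⟨x, by rw [pow_succ' S a]; rfl⟩

/-- From one-step stabilization of ranges and ascent one, the whole space decomposes. -/
lemma top_eq_ker_sup_range {S : X →L[ℂ] X} {q : ℕ}
    (hq : LinearMap.range ((S ^ (q + 2) : X →L[ℂ] X) : X →ₗ[ℂ] X) = LinearMap.range ((S ^ (q + 1) : X →L[ℂ] X) : X →ₗ[ℂ] X))
    (hasc : ∀ x : X, S (S x) = 0 → S x = 0) :
    (⊤ : Submodule ℂ X) = LinearMap.ker ((S : X →L[ℂ] X) : X →ₗ[ℂ] X) ⊔ LinearMap.range ((S : X →L[ℂ] X) : X →ₗ[ℂ] X) := by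
  set p := q + 1 with hp
  have hstab : ∀ k : ℕ, LinearMap.range ((S ^ (p + k) : X →L[ℂ] X) : X →ₗ[ℂ] X) = LinearMap.range ((S ^ p : X →L[ℂ] X) : X →ₗ[ℂ] X) := by
    intro k
    induction k with
    | zero => rfl
    | succ k ih =>
      have h1 : p + (k + 1) = (p + k) + 1 := by omega
      rw [h1, range_pow_succ, ih, ← range_pow_succ]
      exact hq
  apply le_antisymm ?_ le_top
  intro x _
  have hx2p : (S ^ p) x ∈ LinearMap.range ((S ^ (p + p) : X →L[ℂ] X) : X →ₗ[ℂ] X) := by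
    rw [hstab p]
    exact ⟨x, rfl⟩
  obtain ⟨z, hz⟩ := hx2p
  have hker : x - (S ^ p) z ∈ LinearMap.ker ((S : X →L[ℂ] X) : X →ₗ[ℂ] X) := by
    have hmem : x - (S ^ p) z ∈ LinearMap.ker ((S ^ p : X →L[ℂ] X) : X →ₗ[ℂ] X) := by
      rw [LinearMap.mem_ker, map_sub]
      have : (S ^ p) ((S ^ p) z) = (S ^ (p + p)) z := by
        rw [pow_add S p p]; rfl
      show (S ^ p) x - (S ^ p) ((S ^ p) z) = 0
      have hz' : (S ^ (p + p)) z = (S ^ p) x := hz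
      rw [this, hz', sub_self]
    rwa [hp, ker_pow_eq hasc q] at hmem
  have hrange : (S ^ p) z ∈ LinearMap.range ((S : X →L[ℂ] X) : X →ₗ[ℂ] X) := by
    refine ⟨(S ^ q) z, ?_⟩
    rw [hp, pow_succ' S q]; rfl
  have : x = (x - (S ^ p) z) + (S ^ p) z := by abel
  rw [this]
  exact Submodule.add_mem _ (Submodule.mem_sup_left hker) (Submodule.mem_sup_right hrange)

/-- Given the decomposition, `range (S²) = range S`. -/
lemma range_sq_eq {S : X →L[ℂ] X}
    (htop : (⊤ : Submodule ℂ X) = LinearMap.ker ((S : X →L[ℂ] X) : X →ₗ[ℂ] X) ⊔ LinearMap.range ((S : X →L[ℂ] X) : X →ₗ[ℂ] X)) :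
    LinearMap.range ((S ^ 2 : X →L[ℂ] X) : X →ₗ[ℂ] X) = LinearMap.range ((S : X →L[ℂ] X) : X →ₗ[ℂ] X) := by
  apply le_antisymm
  · rintro y ⟨x, rfl⟩
    exact ⟨S x, by rw [pow_two]; rfl⟩
  · rintro y ⟨x, rfl⟩
    have hx : x ∈ LinearMap.ker ((S : X →L[ℂ] X) : X →ₗ[ℂ] X) ⊔ LinearMap.range ((S : X →L[ℂ] X) : X →ₗ[ℂ] X) := htop ▸ Submodule.mem_top
    obtain ⟨n, hn, w, ⟨v, rfl⟩, rfl⟩ := Submodule.mem_sup.mp hx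
    refine ⟨v, ?_⟩
    rw [pow_two]
    have hn0 : S n = 0 := hn
    show S (S v) = S (n + S v)
    rw [map_add, hn0, zero_add]

/-- ker S ⊓ range S = ⊥ under ascent one. -/
lemma ker_inf_range {S : X →L[ℂ] X} (hasc : ∀ x : X, S (S x) = 0 → S x = 0) :
    LinearMap.ker ((S : X →L[ℂ] X) : X →ₗ[ℂ] X) ⊓ LinearMap.range ((S : X →L[ℂ] X) : X →ₗ[ℂ] X) = ⊥ := by
  rw [eq_bot_iff]
  rintro y ⟨hker, x, rfl⟩
  have : S (S x) = 0 := hker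
  exact (Submodule.mem_bot ℂ).mpr (hasc x this)

end Decomp


section Dual
variable {X : Type*} [NormedAddCommGroup X] [NormedSpace ℂ X] [CompleteSpace X]

lemma dual_ker_dim {T : X →L[ℂ] X} {l : ℂ}
    (hW : IsClosed ((LinearMap.range ((T - l • 1 : X →L[ℂ] X) : X →ₗ[ℂ] X) : Submodule ℂ X) : Set X))
    (hfin : FiniteDimensional ℂ (LinearMap.ker ((T - l • 1 : X →L[ℂ] X) : X →ₗ[ℂ] X)))
    (hdisj : LinearMap.ker ((T - l • 1 : X →L[ℂ] X) : X →ₗ[ℂ] X) ⊓ LinearMap.range ((T - l • 1 : X →L[ℂ] X) : X →ₗ[ℂ] X) = ⊥)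
    (htop : (⊤ : Submodule ℂ X) = LinearMap.ker ((T - l • 1 : X →L[ℂ] X) : X →ₗ[ℂ] X) ⊔ LinearMap.range ((T - l • 1 : X →L[ℂ] X) : X →ₗ[ℂ] X)) :
    FiniteDimensional ℂ (LinearMap.ker ((dualOp T - l • 1 : StrongDual ℂ X →L[ℂ] StrongDual ℂ X) : StrongDual ℂ X →ₗ[ℂ] StrongDual ℂ X)) ∧
      Module.finrank ℂ (LinearMap.ker ((T - l • 1 : X →L[ℂ] X) : X →ₗ[ℂ] X)) =
        Module.finrank ℂ (LinearMap.ker ((dualOp T - l • 1 : StrongDual ℂ X →L[ℂ] StrongDual ℂ X) : StrongDual ℂ X →ₗ[ℂ] StrongDual ℂ X)) := by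
  set S : X →L[ℂ] X := T - l • 1 with hSdef
  set N : Submodule ℂ X := LinearMap.ker ((S : X →L[ℂ] X) : X →ₗ[ℂ] X) with hNdef
  set W : Submodule ℂ X := LinearMap.range ((S : X →L[ℂ] X) : X →ₗ[ℂ] X) with hWdef
  haveI : FiniteDimensional ℂ N := hfin
  haveI : CompleteSpace N := FiniteDimensional.complete ℂ N
  haveI : CompleteSpace W := hW.completeSpace_coe
  -- identity for the dual operator
  have hdual : ∀ ψ : StrongDual ℂ X, (dualOp T - l • 1) ψ = ψ.comp S := by
    intro ψ
    ext x
    simp only [dualOp, ContinuousLinearMap.sub_apply, ContinuousLinearMap.smul_apply,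
      ContinuousLinearMap.one_apply, ContinuousLinearMap.flip_apply,
      ContinuousLinearMap.compL_apply, ContinuousLinearMap.coe_comp', Function.comp_apply,
      hSdef, map_sub, map_smul, smul_eq_mul]
  -- the continuous projection onto N along W
  set Φ : (N × W) →L[ℂ] X := N.subtypeL.coprod W.subtypeL with hΦdef
  have hΦapp : ∀ p : N × W, Φ p = ↑p.1 + ↑p.2 := fun p => rfl
  have hker : LinearMap.ker ((Φ : N × W →L[ℂ] X) : N × W →ₗ[ℂ] X) = ⊥ := by
    rw [eq_bot_iff]
    rintro ⟨n, w⟩ hnw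
    have h0 : (↑n : X) + ↑w = 0 := hnw
    have hnW : (↑n : X) ∈ W := by
      have : (↑n : X) = -↑w := eq_neg_of_add_eq_zero_left h0
      rw [this]
      exact W.neg_mem w.2
    have hnN : (↑n : X) ∈ N ⊓ W := ⟨n.2, hnW⟩
    rw [hdisj] at hnN
    have hn0 : (↑n : X) = 0 := hnN
    have hw0 : (↑w : X) = 0 := by rw [← h0, hn0, zero_add]
    refine (Submodule.mem_bot ℂ).mpr ?_
    ext
    · exact hn0
    · exact hw0
  have hsurj : LinearMap.range ((Φ : N × W →L[ℂ] X) : N × W →ₗ[ℂ] X) = ⊤ := by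
    rw [eq_top_iff]
    intro x _
    have hx : x ∈ N ⊔ W := htop ▸ Submodule.mem_top
    obtain ⟨n, hn, w, hw, rfl⟩ := Submodule.mem_sup.mp hx
    exact ⟨(⟨n, hn⟩, ⟨w, hw⟩), rfl⟩
  set e := ContinuousLinearEquiv.ofBijective Φ hker hsurj with hedef
  set P : X →L[ℂ] N := (ContinuousLinearMap.fst ℂ N W).comp
    (e.symm : X →L[ℂ] (N × W)) with hPdef
  have hPapp : ∀ x : X, P x = (e.symm x).1 := fun x => rfl
  have hPn : ∀ n : N, P ↑n = n := by
    intro n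
    have h1 : e.symm ↑n = (n, (0 : W)) := by
      rw [ContinuousLinearEquiv.symm_apply_eq]
      show (↑n : X) = ↑n + ↑(0 : W)
      simp
    rw [hPapp, h1]
  have hPw : ∀ w : X, w ∈ W → P w = 0 := by
    intro w hw
    have h1 : e.symm w = ((0 : N), (⟨w, hw⟩ : W)) := by
      rw [ContinuousLinearEquiv.symm_apply_eq]
      show w = ↑(0 : N) + w
      simp
    rw [hPapp, h1]
  -- the linear map from ker of the dual operator to the continuous dual of N
  set lm : ↥(LinearMap.ker ((dualOp T - l • 1 : StrongDual ℂ X →L[ℂ] StrongDual ℂ X) : StrongDual ℂ X →ₗ[ℂ] StrongDual ℂ X)) →ₗ[ℂ] (N →L[ℂ] ℂ) :=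
    { toFun := fun ψ => (↑ψ : X →L[ℂ] ℂ).comp N.subtypeL
      map_add' := fun ψ φ => by ext; rfl
      map_smul' := fun c ψ => by ext; rfl } with hlm
  have hmemker : ∀ ψ : ↥(LinearMap.ker ((dualOp T - l • 1 : StrongDual ℂ X →L[ℂ] StrongDual ℂ X) : StrongDual ℂ X →ₗ[ℂ] StrongDual ℂ X)), ∀ v : X,
      (↑ψ : X →L[ℂ] ℂ) (S v) = 0 := by
    intro ψ v
    have h1 : (dualOp T - l • 1) (↑ψ : StrongDual ℂ X) = 0 := ψ.2
    rw [hdual] at h1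
    have := congrArg (fun f : X →L[ℂ] ℂ => f v) h1
    simpa using this
  have hinj : Function.Injective lm := by
    intro ψ φ hψφ
    ext x
    have hx : x ∈ N ⊔ W := htop ▸ Submodule.mem_top
    obtain ⟨n, hn, w, hw, rfl⟩ := Submodule.mem_sup.mp hx
    obtain ⟨v, rfl⟩ := hw
    have h1 : (↑ψ : X →L[ℂ] ℂ) n = (↑φ : X →L[ℂ] ℂ) n := by
      have := congrArg (fun f : N →L[ℂ] ℂ => f ⟨n, hn⟩) hψφ
      exact this
    have h2 : (↑ψ : X →L[ℂ] ℂ) (S v) = (↑φ : X →L[ℂ] ℂ) (S v) := by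
      rw [hmemker ψ v, hmemker φ v]
    show (↑ψ : X →L[ℂ] ℂ) (n + S v) = (↑φ : X →L[ℂ] ℂ) (n + S v)
    rw [map_add, map_add, h1, h2]
  have hsurj2 : Function.Surjective lm := by
    intro f
    set ψ : X →L[ℂ] ℂ := f.comp P with hψdef
    have hψker : ψ ∈ LinearMap.ker ((dualOp T - l • 1 : StrongDual ℂ X →L[ℂ] StrongDual ℂ X) : StrongDual ℂ X →ₗ[ℂ] StrongDual ℂ X) := by
      rw [LinearMap.mem_ker, ContinuousLinearMap.coe_coe, hdual]
      ext v
      show ψ (S v) = 0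
      rw [hψdef]
      show f (P (S v)) = 0
      rw [hPw (S v) ⟨v, rfl⟩, map_zero]
    refine ⟨⟨ψ, hψker⟩, ?_⟩
    ext n
    show ψ ↑n = f n
    rw [hψdef]
    show f (P ↑n) = f n
    rw [hPn]
  -- transfer finiteness and ranks
  set eq1 : ↥(LinearMap.ker ((dualOp T - l • 1 : StrongDual ℂ X →L[ℂ] StrongDual ℂ X) : StrongDual ℂ X →ₗ[ℂ] StrongDual ℂ X)) ≃ₗ[ℂ] (N →L[ℂ] ℂ) :=
    LinearEquiv.ofBijective lm ⟨hinj, hsurj2⟩ with heq1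
  have eq2 : (N →ₗ[ℂ] ℂ) ≃ₗ[ℂ] (N →L[ℂ] ℂ) := LinearMap.toContinuousLinearMap
  haveI hfd : FiniteDimensional ℂ (N →L[ℂ] ℂ) := Module.Finite.equiv eq2
  constructor
  · exact Module.Finite.equiv eq1.symm
  · rw [eq1.finrank_eq, ← eq2.finrank_eq]
    exact (Subspace.dual_finrank_eq).symm

end Dual


end QCProof

open QCProof in
/-- Let `T` be a quasi-compact operator on a complex Banach space with
`r(T) = ‖T‖ ≥ 1` (a normaloid quasi-compact operator).  Then `T` has an eigenvalue of
modulus `r(T)`, and for every eigenvalue `λ` with `|λ| = r(T)` the operator `T - λI` is a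
Browder operator with ascent one. -/
theorem normaloid_quasiCompact_browder_ascent_one
    {X : Type*} [NormedAddCommGroup X] [NormedSpace ℂ X] [CompleteSpace X]
    (T : X →L[ℂ] X) (hqc : IsQuasiCompact T)
    (hrad : spectralRadius ℂ T = (‖T‖₊ : ENNReal)) (hnorm : 1 ≤ ‖T‖) :
    (∃ l : ℂ, LinearMap.ker ((T - l • 1 : X →L[ℂ] X) : X →ₗ[ℂ] X) ≠ ⊥ ∧ (‖l‖₊ : ENNReal) = spectralRadius ℂ T) ∧
    (∀ l : ℂ, LinearMap.ker ((T - l • 1 : X →L[ℂ] X) : X →ₗ[ℂ] X) ≠ ⊥ → (‖l‖₊ : ENNReal) = spectralRadius ℂ T →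
      IsClosed (LinearMap.range ((T - l • 1 : X →L[ℂ] X) : X →ₗ[ℂ] X) : Set X) ∧
      FiniteDimensional ℂ (LinearMap.ker ((T - l • 1 : X →L[ℂ] X) : X →ₗ[ℂ] X)) ∧
      FiniteDimensional ℂ (LinearMap.ker ((dualOp T - l • 1 : StrongDual ℂ X →L[ℂ] StrongDual ℂ X) : StrongDual ℂ X →ₗ[ℂ] StrongDual ℂ X)) ∧
      Module.finrank ℂ (LinearMap.ker ((T - l • 1 : X →L[ℂ] X) : X →ₗ[ℂ] X)) =
        Module.finrank ℂ (LinearMap.ker ((dualOp T - l • 1 : StrongDual ℂ X →L[ℂ] StrongDual ℂ X) : StrongDual ℂ X →ₗ[ℂ] StrongDual ℂ X)) ∧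
      LinearMap.ker (((T - l • 1) ^ 2 : X →L[ℂ] X) : X →ₗ[ℂ] X) = LinearMap.ker ((T - l • 1 : X →L[ℂ] X) : X →ₗ[ℂ] X) ∧
      LinearMap.range (((T - l • 1) ^ 2 : X →L[ℂ] X) : X →ₗ[ℂ] X) = LinearMap.range ((T - l • 1 : X →L[ℂ] X) : X →ₗ[ℂ] X)) := by
  obtain ⟨m, hm, K, hK, hTK⟩ := hqc
  rcases subsingleton_or_nontrivial X with hsub | hnt
  · exfalso
    have hT0 : T = 0 := by ext x; exact Subsingleton.elim _ _
    rw [hT0, norm_zero] at hnorm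
    linarith
  -- the common toolbox for any `l` of modulus `‖T‖`
  have main : ∀ l : ℂ, ‖l‖ = ‖T‖ →
      IsClosed ((LinearMap.range ((T - l • 1 : X →L[ℂ] X) : X →ₗ[ℂ] X) : Submodule ℂ X) : Set X) ∧
      FiniteDimensional ℂ (LinearMap.ker ((T - l • 1 : X →L[ℂ] X) : X →ₗ[ℂ] X)) ∧
      ((⊤ : Submodule ℂ X) = LinearMap.ker ((T - l • 1 : X →L[ℂ] X) : X →ₗ[ℂ] X) ⊔ LinearMap.range ((T - l • 1 : X →L[ℂ] X) : X →ₗ[ℂ] X)) ∧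
      (∀ x : X, (T - l • 1) ((T - l • 1) x) = 0 → (T - l • 1) x = 0) := by
    intro l hl
    have hl1 : 1 ≤ ‖l‖ := hl ▸ hnorm
    obtain ⟨hRL, hD⟩ := quasi_structure hm hK hTK hl1
    have hRL1 : RieszLike (T - l • 1) := by
      have := hRL 0; rwa [pow_one] at this
    have hclosed : ∀ n : ℕ,
        IsClosed ((LinearMap.range (((T - l • 1) ^ n : X →L[ℂ] X) : X →ₗ[ℂ] X) : Submodule ℂ X) : Set X) := by
      intro n
      match n with
      | 0 =>
        have h0 : LinearMap.range (((T - l • 1) ^ 0 : X →L[ℂ] X) : X →ₗ[ℂ] X) = ⊤ := by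
          rw [pow_zero]
          exact LinearMap.range_eq_top.mpr (fun x => ⟨x, rfl⟩)
        rw [h0]
        exact isClosed_univ
      | (n + 1) => exact rieszLike_isClosed_range (hRL n)
    have hasc := ascent_one hl hnorm
    obtain ⟨q, hq⟩ := descent_step hclosed hD
    have htop : (⊤ : Submodule ℂ X) = LinearMap.ker ((T - l • 1 : X →L[ℂ] X) : X →ₗ[ℂ] X) ⊔
        LinearMap.range ((T - l • 1 : X →L[ℂ] X) : X →ₗ[ℂ] X) := by
      match q, hq with
      | 0, hq =>
        have hsurj : LinearMap.range ((T - l • 1 : X →L[ℂ] X) : X →ₗ[ℂ] X) = ⊤ := by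
          rw [pow_one] at hq
          rw [hq, pow_zero]
          exact LinearMap.range_eq_top.mpr (fun x => ⟨x, rfl⟩)
        rw [hsurj, sup_top_eq]
      | (q + 1), hq => exact top_eq_ker_sup_range hq hasc
    exact ⟨rieszLike_isClosed_range hRL1, rieszLike_finiteDimensional_ker hRL1, htop, hasc⟩
  constructor
  · -- existence of a peripheral eigenvalue
    haveI : Nontrivial (X →L[ℂ] X) := by
      obtain ⟨x, hx⟩ := exists_ne (0 : X)
      refine nontrivial_of_ne 0 1 (fun h => hx ?_)
      have := congrArg (fun f : X →L[ℂ] X => f x) h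
      simpa using this.symm
    obtain ⟨z, hz_mem, hz_rad⟩ := spectrum.exists_nnnorm_eq_spectralRadius (a := T)
    have hzT : ‖z‖ = ‖T‖ := by
      rw [hrad] at hz_rad
      have := ENNReal.coe_inj.mp hz_rad
      exact congrArg NNReal.toReal this
    refine ⟨z, ?_, hz_rad⟩
    intro hker
    obtain ⟨-, -, htop, -⟩ := main z hzT
    rw [hker, bot_sup_eq] at htop
    have hunit : IsUnit ((algebraMap ℂ (X →L[ℂ] X)) z - T) := by
      set e := ContinuousLinearEquiv.ofBijective (T - z • 1) hker htop.symm with hedef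
      have hSunit : IsUnit (T - z • 1) := by
        refine ⟨⟨T - z • 1, (e.symm : X →L[ℂ] X), ?_, ?_⟩, rfl⟩
        · ext x
          show (T - z • 1) (e.symm x) = x
          have : (T - z • 1) (e.symm x) = e (e.symm x) := rfl
          rw [this, e.apply_symm_apply]
        · ext x
          show e.symm ((T - z • 1) x) = x
          have : (T - z • 1) x = e x := rfl
          rw [this, e.symm_apply_apply]
      rw [Algebra.algebraMap_eq_smul_one]
      have : z • (1 : X →L[ℂ] X) - T = -(T - z • 1) := by abel
      rw [this]
      exact hSunit.neg
    exact spectrum.mem_iff.mp hz_mem hunit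
  · -- the Browder properties at every peripheral eigenvalue
    intro l _hker hl_rad
    have hlT : ‖l‖ = ‖T‖ := by
      rw [hrad] at hl_rad
      have := ENNReal.coe_inj.mp hl_rad
      exact congrArg NNReal.toReal this
    obtain ⟨hclosed, hfin, htop, hasc⟩ := main l hlT
    obtain ⟨hfd, hrank⟩ := dual_ker_dim hclosed hfin (ker_inf_range hasc) htop
    refine ⟨hclosed, hfin, hfd, hrank, ?_, range_sq_eq htop⟩
    exact ker_pow_eq hasc 1
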